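/- With notation as above, x_{n-i} is a non-zerodivisor on S/(I, x_n,...,x_{n-i+1}) if and only if c_i(I) = -∞, i.e., if and only if Ĵ_i = J_i. -/

import Mathlib

open MvPolynomial

noncomputable section

/-- Coercion of a natural number into `WithBot ℕ∞` (degrees, with `⊥ = -∞`, `⊤ = ∞`). -/
def natW (r : ℕ) : WithBot ℕ∞ := ((r : ℕ∞) : WithBot ℕ∞)

/-- The total degree `|a|` of an exponent vector. -/
def degOf {n : ℕ} (a : Fin n →₀ ℕ) : ℕ := a.sum fun _ e => e

variable {k : Type*} [Field k] {n : ℕ}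

/-- The top degree in which the graded pieces of two ideals differ
(`⊥` if they never differ, `⊤` if they differ in unboundedly many degrees). -/
def topDiff (I J : Ideal (MvPolynomial (Fin n) k)) : WithBot ℕ∞ :=
  sSup {x | ∃ r : ℕ, x = natW r ∧
    ¬ ∀ f : MvPolynomial (Fin n) k, f.IsHomogeneous r → (f ∈ I ↔ f ∈ J)}

/-- `I` is a homogeneous (graded) ideal. -/
def HomogIdeal (I : Ideal (MvPolynomial (Fin n) k)) : Prop :=
  ∀ f ∈ I, ∀ r : ℕ, homogeneousComponent r f ∈ I

/-- The maximal homogeneous ideal `𝔪 = (x₁, …, xₙ)`. -/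
def maxIdl (k : Type*) [Field k] (n : ℕ) : Ideal (MvPolynomial (Fin n) k) :=
  Ideal.span (Set.range X)

/-- The ideal `(I, z₁, …, z_i)`. -/
def partIdeal (I : Ideal (MvPolynomial (Fin n) k)) {m : ℕ}
    (z : Fin m → MvPolynomial (Fin n) k) (i : ℕ) : Ideal (MvPolynomial (Fin n) k) :=
  I ⊔ Ideal.span (z '' {j : Fin m | (j : ℕ) < i})

/-- `a_z^i(S/I) = sup { r : [(I,z₁,…,z_i) : z_{i+1}]_r ≠ (I,z₁,…,z_i)_r }`. -/
def aInv (I : Ideal (MvPolynomial (Fin n) k)) {m : ℕ}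
    (z : Fin m → MvPolynomial (Fin n) k) (i : Fin m) : WithBot ℕ∞ :=
  topDiff ((partIdeal I z (i : ℕ)).colon (Ideal.span {z i})) (partIdeal I z (i : ℕ))

/-- `z` is a filter-regular sequence for `S/I`: each `z_{i+1}` avoids every associated
prime of `(I,z₁,…,z_i)` other than the maximal homogeneous ideal. -/
def FilterRegular (I : Ideal (MvPolynomial (Fin n) k)) {m : ℕ}
    (z : Fin m → MvPolynomial (Fin n) k) : Prop :=
  ∀ i : Fin m, ∀ p : Ideal (MvPolynomial (Fin n) k),
    IsAssociatedPrime p (MvPolynomial (Fin n) k ⧸ partIdeal I z (i : ℕ)) →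
    p ≠ maxIdl k n → z i ∉ p

/-- The saturation `⋃_{m ≥ 1} (J : z^m)`. -/
def satIdeal (J : Ideal (MvPolynomial (Fin n) k)) (z : MvPolynomial (Fin n) k) :
    Ideal (MvPolynomial (Fin n) k) :=
  ⨆ m : ℕ, J.colon (Ideal.span {z ^ (m + 1)})

/-- `a <_drevlex b` for the degree reverse lexicographic order with `x₁ > x₂ > … > xₙ`. -/
def RevLexLT {n : ℕ} (a b : Fin n →₀ ℕ) : Prop :=
  degOf a < degOf b ∨
    (degOf a = degOf b ∧ ∃ j : Fin n, b j < a j ∧ ∀ l : Fin n, j < l → a l = b l)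

/-- The initial ideal of `I` with respect to the reverse lexicographic order:
the ideal generated by the leading monomials of the nonzero elements of `I`. -/
def initialIdeal (I : Ideal (MvPolynomial (Fin n) k)) : Ideal (MvPolynomial (Fin n) k) :=
  Ideal.span {g | ∃ f ∈ I, f ≠ 0 ∧ ∃ μ ∈ f.support,
    (∀ ν ∈ f.support, ν = μ ∨ RevLexLT ν μ) ∧ g = monomial μ (1 : k)}

/-- The evaluation `x_{n-i+1} = ⋯ = x_n = 0`. -/
def evalZero (k : Type*) [Field k] (n i : ℕ) :
    MvPolynomial (Fin n) k →ₐ[k] MvPolynomial (Fin n) k :=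
  aeval fun j : Fin n => if (j : ℕ) < n - i then X j else 0

/-- The evaluation `x_{n-i+1} = ⋯ = x_n = 0`, `x_{n-i} = 1`. -/
def evalOne (k : Type*) [Field k] (n i : ℕ) :
    MvPolynomial (Fin n) k →ₐ[k] MvPolynomial (Fin n) k :=
  aeval fun j : Fin n =>
    if (j : ℕ) < n - i - 1 then X j else if (j : ℕ) = n - i - 1 then 1 else 0

/-- `J_i`: the ideal obtained from `In(I)` by evaluating `x_{n-i+1} = ⋯ = x_n = 0`. -/
def Jlow (i : ℕ) (I : Ideal (MvPolynomial (Fin n) k)) : Ideal (MvPolynomial (Fin n) k) :=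
  Ideal.map (evalZero k n i) (initialIdeal I)

/-- `J̃_i`: the ideal obtained from `J_i` by the further evaluation `x_{n-i} = 1`. -/
def Jtil (i : ℕ) (I : Ideal (MvPolynomial (Fin n) k)) : Ideal (MvPolynomial (Fin n) k) :=
  Ideal.map (evalOne k n i) (initialIdeal I)

/-- `c_i(I) = sup { r : (J̃_i/J_i)_r ≠ 0 }`, computed in `S_i = k[x₁,…,x_{n-i}]`. -/
def cInv (i : ℕ) (I : Ideal (MvPolynomial (Fin n) k)) : WithBot ℕ∞ :=
  sSup {x | ∃ r : ℕ, x = natW r ∧ ∃ f : MvPolynomial (Fin n) k,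
    f ∈ Jtil i I ∧ f ∈ supported k {j : Fin n | (j : ℕ) < n - i} ∧
    f.IsHomogeneous r ∧ f ∉ Jlow i I}

/-- `r(I) = sup { r : (S_d/J_d)_r ≠ 0 }`. -/
def rInv (d : ℕ) (I : Ideal (MvPolynomial (Fin n) k)) : WithBot ℕ∞ :=
  sSup {x | ∃ r : ℕ, x = natW r ∧ ∃ f : MvPolynomial (Fin n) k,
    f ∈ supported k {j : Fin n | (j : ℕ) < n - d} ∧ f.IsHomogeneous r ∧ f ∉ Jlow d I}

/-- The partial regularity `reg_t(S/I)`, via its characterization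
`reg_t(S/I) = max_i a_z^i(S/I)` for any filter-regular sequence `z` of `t+1` linear forms
([T1, Proposition 2.2]; equal to `max { aᵢ(S/I) + i : i ≤ t }` in terms of local cohomology). -/
def regT (t : ℕ) (I : Ideal (MvPolynomial (Fin n) k)) : WithBot ℕ∞ :=
  sSup {x | ∃ z : Fin (t + 1) → MvPolynomial (Fin n) k,
    (∀ j, (z j).IsHomogeneous 1) ∧ FilterRegular I z ∧
    x = ⨆ i : Fin (t + 1), aInv I z i}

/-- The Castelnuovo–Mumford regularity `reg(S/I)`, via its characterization
`reg(S/I) = max { a_z^0, …, a_z^{d-1}, r_z(S/I) }` for any filter-regular sequence `z`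
of `d = dim S/I` linear forms ([BS, Theorem 1.10], [T1, Corollary 3.3]). -/
def regCM (I : Ideal (MvPolynomial (Fin n) k)) : WithBot ℕ∞ :=
  sSup {x | ∃ d : ℕ, ringKrullDim (MvPolynomial (Fin n) k ⧸ I) = natW d ∧
    ∃ z : Fin d → MvPolynomial (Fin n) k,
      (∀ j, (z j).IsHomogeneous 1) ∧ FilterRegular I z ∧
      x = (⨆ i : Fin d, aInv I z i) ⊔ topDiff ⊤ (I ⊔ Ideal.span (Set.range z))}

/-- The exponent vectors of the minimal monomial generators of a monomial ideal. -/
def minGens (I : Ideal (MvPolynomial (Fin n) k)) : Set (Fin n →₀ ℕ) :=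
  {μ | monomial μ (1 : k) ∈ I ∧
    ∀ ν : Fin n →₀ ℕ, monomial ν (1 : k) ∈ I → ν ≤ μ → ν = μ}

/-- `E_i`: the exponent vectors of the minimal generators of `In(I)` involving none of
the variables `x_{n-i+1}, …, x_n`. -/
def Evar (i : ℕ) (I : Ideal (MvPolynomial (Fin n) k)) : Set (Fin n →₀ ℕ) :=
  {μ ∈ minGens (initialIdeal I) | ∀ j : Fin n, n - i ≤ (j : ℕ) → μ j = 0}

/-- The set `F` of corners of the staircase determined by `E`:
vectors `a = max(v₁,…,v_s) - (1,…,1)` where `v j ∈ E`, the `j`-th coordinate of `v j`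
strictly exceeds that of `v h` for `h ≠ j`, and `a ≱ w` for all `w ∈ E`. -/
def corners {s : ℕ} (E : Set (Fin s →₀ ℕ)) : Set (Fin s →₀ ℕ) :=
  {a | (∃ v : Fin s → (Fin s →₀ ℕ), (∀ j, v j ∈ E) ∧
      (∀ j h : Fin s, h ≠ j → v h j < v j j) ∧
      ∀ l : Fin s, a l + 1 = Finset.univ.sup fun j => v j l) ∧
    ∀ w ∈ E, ¬ w ≤ a}

namespace Work

variable {n : ℕ}

lemma degOf_eq_degree (a : Fin n →₀ ℕ) : degOf a = a.degree := rfl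

lemma degOf_add (a b : Fin n →₀ ℕ) : degOf (a + b) = degOf a + degOf b := by
  simp only [degOf_eq_degree, Finsupp.degree_eq_weight_one, map_add]

lemma degOf_mono {a b : Fin n →₀ ℕ} (h : a ≤ b) : degOf a ≤ degOf b := by
  obtain ⟨c, rfl⟩ := le_iff_exists_add.mp h
  simp [degOf_add]

lemma rl_total {a b : Fin n →₀ ℕ} (h : a ≠ b) : RevLexLT a b ∨ RevLexLT b a := by
  rcases lt_trichotomy (degOf a) (degOf b) with hd | hd | hd
  · exact Or.inl (Or.inl hd)
  · -- same degree, find last differing coordinate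
    have hne : ∃ j : Fin n, a j ≠ b j := by
      by_contra hc
      push_neg at hc
      exact h (Finsupp.ext hc)
    classical
    let s : Finset (Fin n) := Finset.univ.filter fun j => a j ≠ b j
    have hs : s.Nonempty := by
      obtain ⟨j, hj⟩ := hne
      exact ⟨j, by simp [s, hj]⟩
    obtain ⟨j, hjs, hmax⟩ := s.exists_max_image (fun j => j) hs
    have hj : a j ≠ b j := by simpa [s] using hjs
    have htail : ∀ l : Fin n, j < l → a l = b l := by
      intro l hl
      by_contra hc
      have := hmax l (by simp [s, hc])
      exact absurd hl (not_lt.mpr this)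
    rcases lt_or_gt_of_ne hj with hlt | hgt
    · exact Or.inr (Or.inr ⟨hd.symm, j, hlt, fun l hl => (htail l hl).symm⟩)
    · exact Or.inl (Or.inr ⟨hd, j, hgt, htail⟩)
  · exact Or.inr (Or.inl hd)

lemma rl_asymm {a b : Fin n →₀ ℕ} (h : RevLexLT a b) : ¬ RevLexLT b a := by
  rcases h with hd | ⟨hd, j, hj, htail⟩
  · rintro (hd' | ⟨hd', _⟩) <;> omega
  · rintro (hd' | ⟨hd', j', hj', htail'⟩)
    · omega
    · rcases lt_trichotomy j j' with hlt | rfl | hgt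
      · have := htail j' hlt; omega
      · omega
      · have := htail' j hgt; omega

lemma rl_irrefl (a : Fin n →₀ ℕ) : ¬ RevLexLT a a := fun h => rl_asymm h h

lemma rl_trans {a b c : Fin n →₀ ℕ} (h1 : RevLexLT a b) (h2 : RevLexLT b c) :
    RevLexLT a c := by
  rcases h1 with hd1 | ⟨hd1, j1, hj1, ht1⟩
  · rcases h2 with hd2 | ⟨hd2, _⟩
    · exact Or.inl (hd1.trans hd2)
    · exact Or.inl (by omega)
  · rcases h2 with hd2 | ⟨hd2, j2, hj2, ht2⟩
    · exact Or.inl (by omega)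
    · refine Or.inr ⟨hd1.trans hd2, ?_⟩
      rcases lt_trichotomy j1 j2 with hlt | rfl | hgt
      · exact ⟨j2, by rw [← ht1 j2 hlt] at hj2; exact hj2,
          fun l hl => (ht1 l (hlt.trans hl)).trans (ht2 l hl)⟩
      · exact ⟨j1, hj2.trans hj1, fun l hl => (ht1 l hl).trans (ht2 l hl)⟩
      · exact ⟨j1, by rw [← ht2 j1 hgt]; exact hj1,
          fun l hl => (ht1 l hl).trans (ht2 l (hgt.trans hl))⟩

lemma rl_add_right {a b : Fin n →₀ ℕ} (c : Fin n →₀ ℕ) (h : RevLexLT a b) :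
    RevLexLT (a + c) (b + c) := by
  rcases h with hd | ⟨hd, j, hj, ht⟩
  · exact Or.inl (by simp only [degOf_add]; omega)
  · refine Or.inr ⟨by simp only [degOf_add]; omega, j, ?_, fun l hl => ?_⟩
    · simp only [Finsupp.add_apply]; omega
    · simp only [Finsupp.add_apply, ht l hl]

lemma rl_add_cancel {a b c : Fin n →₀ ℕ} (h : RevLexLT (a + c) (b + c)) :
    RevLexLT a b := by
  rcases eq_or_ne a b with rfl | hne
  · exact absurd h (rl_irrefl _)
  · rcases rl_total hne with h' | h'
    · exact h'
    · exact absurd h (rl_asymm (rl_add_right c h'))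

/-- if `b` vanishes on high coordinates (≥ m) but `a` does not, same degree, then a < b -/
lemma rl_high {m : ℕ} {a b : Fin n →₀ ℕ} (hd : degOf a = degOf b)
    (hb : ∀ l : Fin n, m ≤ (l : ℕ) → b l = 0)
    (ha : ∃ l : Fin n, m ≤ (l : ℕ) ∧ a l ≠ 0) : RevLexLT a b := by
  classical
  let s : Finset (Fin n) := Finset.univ.filter fun l => m ≤ (l : ℕ) ∧ a l ≠ 0
  have hs : s.Nonempty := by
    obtain ⟨l, hl1, hl2⟩ := ha
    exact ⟨l, by simp [s, hl1, hl2]⟩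
  obtain ⟨j, hjs, hmax⟩ := s.exists_max_image (fun l => l) hs
  obtain ⟨hjm, hja⟩ : m ≤ (j : ℕ) ∧ a j ≠ 0 := by simpa [s] using hjs
  refine Or.inr ⟨hd, j, ?_, fun l hl => ?_⟩
  · rw [hb j hjm]; omega
  · have hlm : m ≤ (l : ℕ) := le_trans hjm (by exact_mod_cast hl.le)
    rw [hb l hlm]
    by_contra hc
    have := hmax l (by simp [s, hlm, hc])
    exact absurd hl (not_lt.mpr this)


variable {k : Type*} [Field k]

lemma exists_rl_max (s : Finset (Fin n →₀ ℕ)) (hs : s.Nonempty) :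
    ∃ μ ∈ s, ∀ ν ∈ s, ν = μ ∨ RevLexLT ν μ := by
  classical
  induction s using Finset.induction_on with
  | empty => exact absurd hs (by simp)
  | @insert a s' ha ih =>
    rcases s'.eq_empty_or_nonempty with rfl | hs'
    · exact ⟨a, by simp, by simp⟩
    · obtain ⟨μ, hμs, hmax⟩ := ih hs'
      rcases eq_or_ne a μ with rfl | hne
      · exact ⟨a, Finset.mem_insert_self _ _, fun ν hν => by
          rcases Finset.mem_insert.mp hν with rfl | h
          · exact Or.inl rfl
          · exact hmax ν h⟩
      · rcases rl_total hne with hlt | hgt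
        · exact ⟨μ, Finset.mem_insert_of_mem hμs, fun ν hν => by
            rcases Finset.mem_insert.mp hν with rfl | h
            · exact Or.inr hlt
            · exact hmax ν h⟩
        · refine ⟨a, Finset.mem_insert_self _ _, fun ν hν => ?_⟩
          rcases Finset.mem_insert.mp hν with rfl | h
          · exact Or.inl rfl
          · rcases hmax ν h with rfl | hlt
            · exact Or.inr hgt
            · exact Or.inr (rl_trans hlt hgt)

variable {k : Type*} [Field k]

/-- `μ` is the revlex-leading monomial of `f`. -/
def IsLM (f : MvPolynomial (Fin n) k) (μ : Fin n →₀ ℕ) : Prop :=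
  μ ∈ f.support ∧ ∀ ν ∈ f.support, ν = μ ∨ RevLexLT ν μ

lemma exists_isLM {f : MvPolynomial (Fin n) k} (hf : f ≠ 0) : ∃ μ, IsLM f μ := by
  obtain ⟨μ, h1, h2⟩ := exists_rl_max f.support (by simpa using hf)
  exact ⟨μ, h1, h2⟩

lemma isLM_unique {f : MvPolynomial (Fin n) k} {μ ν : Fin n →₀ ℕ}
    (h1 : IsLM f μ) (h2 : IsLM f ν) : μ = ν := by
  rcases h1.2 ν h2.1 with rfl | hlt
  · rfl
  · rcases h2.2 μ h1.1 with rfl | hlt'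
    · rfl
    · exact absurd hlt (rl_asymm hlt')

lemma mem_support_monomial_mul {δ w : Fin n →₀ ℕ} {f : MvPolynomial (Fin n) k} :
    w ∈ (monomial δ (1 : k) * f).support ↔ δ ≤ w ∧ (w - δ) ∈ f.support := by
  classical
  simp only [mem_support_iff, coeff_monomial_mul', one_mul]
  split_ifs with h <;> simp [h]

lemma isLM_monomial_mul {f : MvPolynomial (Fin n) k} {μ : Fin n →₀ ℕ} (δ : Fin n →₀ ℕ)
    (h : IsLM f μ) : IsLM (monomial δ (1 : k) * f) (δ + μ) := by
  constructor
  · rw [mem_support_monomial_mul]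
    exact ⟨le_add_right le_rfl, by simpa using h.1⟩
  · intro ν hν
    rw [mem_support_monomial_mul] at hν
    obtain ⟨hle, hsup⟩ := hν
    rcases h.2 _ hsup with he | hlt
    · left
      have : δ + (ν - δ) = ν := add_tsub_cancel_of_le hle
      rw [← this, he, add_comm]
    · right
      have hv : ν - δ + δ = ν := tsub_add_cancel_of_le hle
      have := rl_add_right δ hlt
      rwa [hv, add_comm μ δ] at this

lemma isLM_of_support_subset {f g : MvPolynomial (Fin n) k} {μ : Fin n →₀ ℕ}
    (hμ : μ ∈ f.support) (hsub : ∀ ν ∈ f.support, ν = μ ∨ RevLexLT ν μ) : IsLM f μ :=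
  ⟨hμ, hsub⟩

/-- the set of exponent vectors of a given degree is finite -/
lemma finite_degOf_eq (r : ℕ) : {ν : Fin n →₀ ℕ | degOf ν = r}.Finite := by
  apply Set.Finite.subset (Finsupp.finite_of_degree_le r)
  intro ν hν
  simp only [Set.mem_setOf_eq] at hν ⊢
  exact le_of_eq hν


/-- `ν` only involves the variables `x_0,…,x_{m-1}`. -/
def Low (m : ℕ) (ν : Fin n →₀ ℕ) : Prop := ∀ l : Fin n, m ≤ (l : ℕ) → ν l = 0

/-- `f` only involves the variables `x_0,…,x_{m-1}`. -/
def LowP (m : ℕ) (f : MvPolynomial (Fin n) k) : Prop := ∀ ν ∈ f.support, Low m ν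

open Classical in
lemma evalZero_monomial (i : ℕ) (ν : Fin n →₀ ℕ) (c : k) :
    evalZero k n i (monomial ν c) =
      if Low (n - i) ν then monomial ν c else 0 := by
  rw [evalZero, aeval_monomial]
  split_ifs with h
  · rw [monomial_eq, algebraMap_eq]
    congr 1
    apply Finsupp.prod_congr
    intro j hj
    have hjlt : (j : ℕ) < n - i := by
      by_contra hc
      exact (Finsupp.mem_support_iff.mp hj) (h j (le_of_not_gt hc))
    rw [if_pos hjlt]
  · simp only [Low, not_forall] at h
    obtain ⟨l, hl, hne⟩ := h
    rw [Finsupp.prod, Finset.prod_eq_zero (Finsupp.mem_support_iff.mpr hne)]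
    · exact mul_zero _
    · rw [if_neg (not_lt.mpr hl), zero_pow hne]

open Classical in
lemma evalOne_monomial (i : ℕ) (hin : i < n) (ν : Fin n →₀ ℕ) (c : k) (x : Fin n) (hx : (x : ℕ) = n - i - 1) :
    evalOne k n i (monomial ν c) =
      if Low (n - i) ν then monomial (ν.erase x) c else 0 := by
  rw [evalOne, aeval_monomial]
  split_ifs with h
  · rw [monomial_eq, algebraMap_eq]
    congr 1
    have hsupp : (Finsupp.erase x ν).support = ν.support.erase x := Finsupp.support_erase
    have key : ∀ (s : Finset (Fin n)), s ⊆ ν.support.erase x →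
        (∏ j ∈ s, (if (j : ℕ) < n - i - 1 then (X j : MvPolynomial (Fin n) k)
          else if (j : ℕ) = n - i - 1 then 1 else 0) ^ ν j)
        = ∏ j ∈ s, (X j : MvPolynomial (Fin n) k) ^ Finsupp.erase x ν j := by
      intro s hs
      apply Finset.prod_congr rfl
      intro j hj
      have hj' := hs hj
      have hjx : j ≠ x := Finset.ne_of_mem_erase hj'
      have hjs : j ∈ ν.support := Finset.mem_of_mem_erase hj'
      have hjm : (j : ℕ) < n - i := by
        by_contra hc
        exact (Finsupp.mem_support_iff.mp hjs) (h j (le_of_not_gt hc))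
      have hne : (j : ℕ) ≠ (x : ℕ) := fun hc => hjx (Fin.ext hc)
      rw [if_pos (by omega), Finsupp.erase_ne hjx]
    show (∏ j ∈ ν.support, _ ^ ν j) = ∏ j ∈ (Finsupp.erase x ν).support, _ ^ Finsupp.erase x ν j
    rw [hsupp]
    by_cases hxs : x ∈ ν.support
    · rw [← Finset.mul_prod_erase _ _ hxs, if_neg (by omega), if_pos hx, one_pow, one_mul]
      exact key _ (le_refl _)
    · rw [Finset.erase_eq_of_notMem hxs]
      exact key _ (by rw [Finset.erase_eq_of_notMem hxs])
  · simp only [Low, not_forall] at h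
    obtain ⟨l, hl, hne⟩ := h
    rw [Finsupp.prod, Finset.prod_eq_zero (Finsupp.mem_support_iff.mpr hne)]
    · exact mul_zero _
    · rw [if_neg (by omega), if_neg (by omega), zero_pow hne]
      


variable (i : ℕ)

open Classical in
lemma coeff_evalZero (f : MvPolynomial (Fin n) k) (μ : Fin n →₀ ℕ) :
    coeff μ (evalZero k n i f) = if Low (n - i) μ then coeff μ f else 0 := by
  conv_lhs => rw [f.as_sum, map_sum]
  rw [coeff_sum]
  simp only [evalZero_monomial, apply_ite (coeff μ), coeff_monomial, coeff_zero]
  by_cases hμ : Low (n - i) μ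
  · rw [if_pos hμ]
    have : ∀ ν ∈ f.support,
        (if Low (n - i) ν then if ν = μ then coeff ν f else 0 else 0)
        = if ν = μ then coeff ν f else 0 := by
      intro ν hν
      by_cases he : ν = μ
      · subst he; rw [if_pos hμ]
      · simp [he]
    rw [Finset.sum_congr rfl this, Finset.sum_ite_eq' f.support μ (fun ν => coeff ν f)]
    split_ifs with h
    · rfl
    · exact (notMem_support_iff.mp h).symm
  · rw [if_neg hμ]
    apply Finset.sum_eq_zero
    intro ν hν
    by_cases he : ν = μ
    · subst he; rw [if_neg hμ]
    · simp [he]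

lemma lowP_evalZero (f : MvPolynomial (Fin n) k) : LowP (n - i) (evalZero k n i f) := by
  intro ν hν
  rw [mem_support_iff, coeff_evalZero] at hν
  by_contra hc
  rw [if_neg hc] at hν
  exact hν rfl

lemma evalZero_eq_self {f : MvPolynomial (Fin n) k} (h : LowP (n - i) f) :
    evalZero k n i f = f := by
  ext μ
  rw [coeff_evalZero]
  split_ifs with hμ
  · rfl
  · by_contra hc
    exact hμ (h μ (mem_support_iff.mpr fun h0 => hc h0.symm))

lemma evalZero_idem (f : MvPolynomial (Fin n) k) :
    evalZero k n i (evalZero k n i f) = evalZero k n i f :=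
  evalZero_eq_self i (lowP_evalZero i f)

lemma evalZero_homogeneousComponent (r : ℕ) (f : MvPolynomial (Fin n) k) :
    homogeneousComponent r (evalZero k n i f) = evalZero k n i (homogeneousComponent r f) := by
  ext μ
  rw [coeff_homogeneousComponent, coeff_evalZero, coeff_evalZero, coeff_homogeneousComponent]
  by_cases h1 : μ.degree = r <;> by_cases h2 : Low (n - i) μ <;> simp [h1, h2]

lemma degOf_eq_of_isHomog {F : MvPolynomial (Fin n) k} {r : ℕ} (hF : F.IsHomogeneous r)
    {ν : Fin n →₀ ℕ} (hν : ν ∈ F.support) : degOf ν = r := by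
  have := hF (mem_support_iff.mp hν)
  rw [show degOf ν = ν.degree from rfl, Finsupp.degree_eq_weight_one]
  exact this

lemma isHomog_of_degOf {F : MvPolynomial (Fin n) k} {r : ℕ}
    (h : ∀ ν ∈ F.support, degOf ν = r) : F.IsHomogeneous r := by
  intro d hd
  have := h d (mem_support_iff.mpr hd)
  rw [show degOf d = d.degree from rfl, Finsupp.degree_eq_weight_one] at this
  exact this

lemma isHomogeneous_evalZero {f : MvPolynomial (Fin n) k} {r : ℕ} (hf : f.IsHomogeneous r) :
    (evalZero k n i f).IsHomogeneous r := by
  apply isHomog_of_degOf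
  intro ν hν
  rw [mem_support_iff, coeff_evalZero] at hν
  apply degOf_eq_of_isHomog hf
  rw [mem_support_iff]
  intro hc
  apply hν
  rw [hc]
  exact ite_self 0

lemma support_evalZero_subset (f : MvPolynomial (Fin n) k) :
    (evalZero k n i f).support ⊆ f.support := by
  intro ν hν
  rw [mem_support_iff, coeff_evalZero] at hν
  rw [mem_support_iff]
  intro hc
  apply hν
  rw [hc]
  exact ite_self 0

lemma isLM_evalZero {f : MvPolynomial (Fin n) k} {μ : Fin n →₀ ℕ}
    (h : IsLM f μ) (hμ : Low (n - i) μ) :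
    IsLM (evalZero k n i f) μ ∧ evalZero k n i f ≠ 0 := by
  have hin : μ ∈ (evalZero k n i f).support := by
    rw [mem_support_iff, coeff_evalZero, if_pos hμ]
    exact mem_support_iff.mp h.1
  refine ⟨⟨hin, fun ν hν => h.2 ν (support_evalZero_subset i f hν)⟩, ?_⟩
  intro hc
  rw [hc] at hin
  simp at hin

lemma isLM_lift {F : MvPolynomial (Fin n) k} {r : ℕ} (hF : F.IsHomogeneous r)
    {μ : Fin n →₀ ℕ} (h : IsLM (evalZero k n i F) μ) : IsLM F μ := by
  have hμlow : Low (n - i) μ := lowP_evalZero i F μ h.1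
  have hμF : μ ∈ F.support := support_evalZero_subset i F h.1
  refine ⟨hμF, fun ν hν => ?_⟩
  by_cases hνlow : Low (n - i) ν
  · apply h.2
    rw [mem_support_iff, coeff_evalZero, if_pos hνlow]
    exact mem_support_iff.mp hν
  · right
    apply rl_high (m := n - i)
    · rw [degOf_eq_of_isHomog hF hν, degOf_eq_of_isHomog hF hμF]
    · exact hμlow
    · simp only [Low, not_forall] at hνlow
      obtain ⟨l, h1, h2⟩ := hνlow
      exact ⟨l, h1, h2⟩


section Ideals
variable (I : Ideal (MvPolynomial (Fin n) k))

/-- exponents of leading monomials of elements of `I` -/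
def T0 : Set (Fin n →₀ ℕ) := {μ | ∃ f ∈ I, f ≠ 0 ∧ IsLM f μ}

lemma initialIdeal_eq : initialIdeal I = Ideal.span ((fun s => monomial s (1 : k)) '' T0 I) := by
  unfold initialIdeal
  congr 1
  ext g
  constructor
  · rintro ⟨f, hf, hne, μ, hμ, hmax, rfl⟩
    exact ⟨μ, ⟨f, hf, hne, hμ, hmax⟩, rfl⟩
  · rintro ⟨μ, ⟨f, hf, hne, hμ, hmax⟩, rfl⟩
    exact ⟨f, hf, hne, μ, hμ, hmax, rfl⟩

variable (i : ℕ)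

/-- exponents of leading monomials not involving the last `i` variables -/
def T0low : Set (Fin n →₀ ℕ) := {μ | μ ∈ T0 I ∧ Low (n - i) μ}

lemma Jlow_eq : Jlow i I = Ideal.span ((fun s => monomial s (1 : k)) '' T0low I i) := by
  rw [Jlow, initialIdeal_eq, Ideal.map_span]
  apply le_antisymm
  · rw [Ideal.span_le]
    rintro g ⟨g', ⟨μ, hμ, rfl⟩, rfl⟩
    simp only [AlgHom.coe_coe] at *
    rw [evalZero_monomial]
    split_ifs with h
    · exact Ideal.subset_span ⟨μ, ⟨hμ, h⟩, rfl⟩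
    · exact Ideal.zero_mem _
  · rw [Ideal.span_le]
    rintro g ⟨μ, ⟨hμ, hlow⟩, rfl⟩
    apply Ideal.subset_span
    refine ⟨monomial μ 1, ⟨μ, hμ, rfl⟩, ?_⟩
    simp only [AlgHom.coe_coe]
    rw [evalZero_monomial, if_pos hlow]

lemma mem_Jlow_iff (f : MvPolynomial (Fin n) k) :
    f ∈ Jlow i I ↔ ∀ μ ∈ f.support, ∃ τ ∈ T0low I i, τ ≤ μ := by
  rw [Jlow_eq, mem_ideal_span_monomial_image]

variable (hi : i < n)

/-- the index of the variable `x_{n-i}` (0-indexed: `x_{n-i-1}`) -/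
def xIdx : Fin n := ⟨n - i - 1, by omega⟩

lemma Jtil_eq : Jtil i I =
    Ideal.span ((fun s => monomial s (1 : k)) '' (Finsupp.erase (xIdx i hi) '' T0low I i)) := by
  rw [Jtil, initialIdeal_eq, Ideal.map_span]
  apply le_antisymm
  · rw [Ideal.span_le]
    rintro g ⟨g', ⟨μ, hμ, rfl⟩, rfl⟩
    simp only [AlgHom.coe_coe]
    rw [evalOne_monomial i hi _ _ (xIdx i hi) rfl]
    split_ifs with h
    · exact Ideal.subset_span ⟨_, ⟨μ, ⟨hμ, h⟩, rfl⟩, rfl⟩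
    · exact Ideal.zero_mem _
  · rw [Ideal.span_le]
    rintro g ⟨ν, ⟨μ, ⟨hμ, hlow⟩, rfl⟩, rfl⟩
    apply Ideal.subset_span
    refine ⟨monomial μ 1, ⟨μ, hμ, rfl⟩, ?_⟩
    simp only [AlgHom.coe_coe]
    rw [evalOne_monomial i hi _ _ (xIdx i hi) rfl, if_pos hlow]

lemma mem_Jtil_iff (f : MvPolynomial (Fin n) k) :
    f ∈ Jtil i I ↔ ∀ μ ∈ f.support, ∃ τ ∈ T0low I i, Finsupp.erase (xIdx i hi) τ ≤ μ := by
  rw [Jtil_eq I i hi, mem_ideal_span_monomial_image]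
  constructor
  · intro h μ hμ
    obtain ⟨si, ⟨τ, hτ, rfl⟩, hle⟩ := h μ hμ
    exact ⟨τ, hτ, hle⟩
  · intro h μ hμ
    obtain ⟨τ, hτ, hle⟩ := h μ hμ
    exact ⟨_, ⟨τ, hτ, rfl⟩, hle⟩

lemma erase_le {x : Fin n} (τ : Fin n →₀ ℕ) : Finsupp.erase x τ ≤ τ := by
  rw [Finsupp.le_def]
  intro l
  rcases eq_or_ne l x with rfl | hne
  · simp [Finsupp.erase_same]
  · simp [Finsupp.erase_ne hne]

lemma Jlow_le_Jtil (hi : i < n) : Jlow i I ≤ Jtil i I := by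
  intro f hf
  rw [mem_Jlow_iff] at hf
  rw [mem_Jtil_iff I i hi]
  intro μ hμ
  obtain ⟨τ, hτ, hle⟩ := hf μ hμ
  exact ⟨τ, hτ, le_trans (erase_le τ) hle⟩

lemma support_homogeneousComponent_subset (r : ℕ) (f : MvPolynomial (Fin n) k) :
    (homogeneousComponent r f).support ⊆ f.support := by
  intro ν hν
  rw [mem_support_iff, coeff_homogeneousComponent] at hν
  rw [mem_support_iff]
  intro hc
  apply hν
  rw [hc]
  exact ite_self 0

variable {I} in
lemma T0_witness (hI : HomogIdeal I) {μ : Fin n →₀ ℕ} (hμ : μ ∈ T0 I) :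
    ∃ h, h ∈ I ∧ h ≠ 0 ∧ h.IsHomogeneous (degOf μ) ∧ IsLM h μ := by
  obtain ⟨f, hfI, hfne, hμf, hmax⟩ := hμ
  have hcoeff : coeff μ (homogeneousComponent (degOf μ) f) = coeff μ f := by
    rw [coeff_homogeneousComponent, if_pos]
    rfl
  have hμh : μ ∈ (homogeneousComponent (degOf μ) f).support :=
    mem_support_iff.mpr (by rw [hcoeff]; exact mem_support_iff.mp hμf)
  refine ⟨homogeneousComponent (degOf μ) f, hI f hfI _, ?_,
    homogeneousComponent_isHomogeneous _ _,
    ⟨hμh, fun ν hν => hmax ν (support_homogeneousComponent_subset _ _ hν)⟩⟩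
  intro hc
  rw [hc] at hμh
  simp at hμh

end Ideals

section IbarSec
variable (I : Ideal (MvPolynomial (Fin n) k)) (i : ℕ)

/-- the image of `I` under setting the last `i` variables to zero -/
def Ibar : Ideal (MvPolynomial (Fin n) k) := Ideal.map (evalZero k n i) I

lemma mem_Ibar_pi {f : MvPolynomial (Fin n) k} (hf : f ∈ Ibar I i) :
    ∃ F ∈ I, evalZero k n i F = evalZero k n i f := by
  rw [Ibar, Ideal.map] at hf
  refine Submodule.span_induction ?_ ?_ ?_ ?_ hf
  · rintro x ⟨a, ha, rfl⟩
    exact ⟨a, ha, (evalZero_idem i a).symm⟩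
  · exact ⟨0, Ideal.zero_mem I, by simp⟩
  · rintro x y - - ⟨F, hF, he⟩ ⟨G, hG, he'⟩
    exact ⟨F + G, Ideal.add_mem I hF hG, by rw [map_add, map_add, he, he']⟩
  · rintro r x - ⟨F, hF, he⟩
    refine ⟨evalZero k n i r * F, Ideal.mul_mem_left I _ hF, ?_⟩
    rw [smul_eq_mul, map_mul, map_mul, evalZero_idem, he]

lemma pi_mem_Ibar {f : MvPolynomial (Fin n) k} (hf : f ∈ Ibar I i) :
    evalZero k n i f ∈ Ibar I i := by
  obtain ⟨F, hF, he⟩ := mem_Ibar_pi I i hf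
  rw [← he]
  exact Ideal.mem_map_of_mem _ hF

lemma low_rep {f : MvPolynomial (Fin n) k} (hf : f ∈ Ibar I i) (hlow : LowP (n - i) f) :
    ∃ F ∈ I, evalZero k n i F = f := by
  obtain ⟨F, hF, he⟩ := mem_Ibar_pi I i hf
  rw [evalZero_eq_self i hlow] at he
  exact ⟨F, hF, he⟩

variable {I i}

lemma lowmem_T0low (hI : HomogIdeal I) {f : MvPolynomial (Fin n) k} {r : ℕ} {μ : Fin n →₀ ℕ}
    (hf : f ∈ Ibar I i) (hne : f ≠ 0) (hlow : LowP (n - i) f)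
    (hhom : f.IsHomogeneous r) (hLM : IsLM f μ) : μ ∈ T0low I i := by
  obtain ⟨F, hFI, hFe⟩ := low_rep I i hf hlow
  have hGI : homogeneousComponent r F ∈ I := hI F hFI r
  have hπG : evalZero k n i (homogeneousComponent r F) = f := by
    rw [← evalZero_homogeneousComponent, hFe,
      homogeneousComponent_of_mem ((mem_homogeneousSubmodule _ _).mpr hhom), if_pos rfl]
  have hGne : homogeneousComponent r F ≠ 0 := by
    intro hc
    rw [hc, map_zero] at hπG
    exact hne hπG.symm
  have hGLM : IsLM (homogeneousComponent r F) μ :=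
    isLM_lift i (homogeneousComponent_isHomogeneous r F) (by rw [hπG]; exact hLM)
  exact ⟨⟨homogeneousComponent r F, hGI, hGne, hGLM⟩, hlow μ hLM.1⟩

lemma T0low_elt (hI : HomogIdeal I) {μ : Fin n →₀ ℕ} (hμ : μ ∈ T0low I i) :
    ∃ g, g ∈ Ibar I i ∧ g ≠ 0 ∧ IsLM g μ ∧ LowP (n - i) g ∧ g.IsHomogeneous (degOf μ) := by
  obtain ⟨h, hmem, hne, hhom, hLM⟩ := T0_witness hI hμ.1
  obtain ⟨hLM', hne'⟩ := isLM_evalZero i hLM hμ.2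
  exact ⟨evalZero k n i h, Ideal.mem_map_of_mem _ hmem, hne', hLM', lowP_evalZero i h,
    isHomogeneous_evalZero i hhom⟩

end IbarSec

section PartB
variable {I : Ideal (MvPolynomial (Fin n) k)} {i : ℕ}

lemma monomial_mem_Jtil_of_not_Jlow (hi : i < n) {f : MvPolynomial (Fin n) k}
    (hf : f ∈ Jtil i I) (hnf : f ∉ Jlow i I) :
    ∃ μ' : Fin n →₀ ℕ, Low (n - i) μ' ∧ (monomial μ' (1 : k)) ∈ Jtil i I ∧
      (monomial μ' (1 : k)) ∉ Jlow i I := by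
  classical
  rw [mem_Jlow_iff] at hnf
  push_neg at hnf
  obtain ⟨μ, hμs, hnot⟩ := hnf
  rw [mem_Jtil_iff I i hi] at hf
  obtain ⟨τ, hτ, hle⟩ := hf μ hμs
  set μ' : Fin n →₀ ℕ := μ.filter (fun l => (l : ℕ) < n - i) with hμ'
  have hμ'le : μ' ≤ μ := by
    rw [Finsupp.le_def]
    intro l
    rw [hμ', Finsupp.filter_apply]
    split_ifs <;> simp
  have hμ'low : Low (n - i) μ' := by
    intro l hl
    rw [hμ', Finsupp.filter_apply, if_neg (by omega)]
  have hsupp : (monomial μ' (1 : k)).support = {μ'} := by classical rw [support_monomial, if_neg one_ne_zero]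
  refine ⟨μ', hμ'low, ?_, ?_⟩
  · rw [mem_Jtil_iff I i hi]
    intro ν hν
    rw [hsupp, Finset.mem_singleton] at hν
    subst hν
    refine ⟨τ, hτ, ?_⟩
    rw [Finsupp.le_def]
    intro l
    rcases lt_or_ge (l : ℕ) (n - i) with hllt | hlge
    · have := Finsupp.le_def.mp hle l
      rw [hμ', Finsupp.filter_apply, if_pos hllt]
      exact this
    · have hτl : τ l = 0 := hτ.2 l hlge
      have : Finsupp.erase (xIdx i hi) τ l ≤ τ l := Finsupp.le_def.mp (erase_le τ) l
      omega
  · rw [mem_Jlow_iff]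
    intro hc
    obtain ⟨τ', hτ', hle'⟩ := hc μ' (by rw [hsupp]; exact Finset.mem_singleton_self _)
    exact hnot τ' hτ' (le_trans hle' hμ'le)

lemma natW_ne_bot (r : ℕ) : natW r ≠ ⊥ := WithBot.coe_ne_bot

lemma partB (hI : HomogIdeal I) (hi : i < n) : cInv i I = ⊥ ↔ Jtil i I = Jlow i I := by
  rw [cInv, sSup_eq_bot]
  constructor
  · intro h
    apply le_antisymm _ (Jlow_le_Jtil I i hi)
    by_contra hc
    obtain ⟨f, hf, hnf⟩ := SetLike.not_le_iff_exists.mp hc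
    obtain ⟨μ', hlow, hmem, hnmem⟩ := monomial_mem_Jtil_of_not_Jlow hi hf hnf
    have hsupp : (monomial μ' (1 : k)).support = {μ'} := by classical rw [support_monomial, if_neg one_ne_zero]
    refine natW_ne_bot (degOf μ') (h _ ⟨degOf μ', rfl, monomial μ' 1, hmem, ?_, ?_, hnmem⟩)
    · rw [mem_supported]
      intro l hl
      obtain ⟨d, hd, hld⟩ := (mem_vars l).mp (Finset.mem_coe.mp hl)
      rw [hsupp, Finset.mem_singleton] at hd
      subst hd
      have := Finsupp.mem_support_iff.mp hld
      simp only [Set.mem_setOf_eq]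
      by_contra hc
      exact this (hlow l (le_of_not_gt hc))
    · apply isHomog_of_degOf
      intro ν hν
      rw [hsupp, Finset.mem_singleton] at hν
      subst hν
      rfl
  · intro h x hx
    obtain ⟨r, rfl, f, hf1, _, _, hf4⟩ := hx
    exact absurd (h ▸ hf1) hf4

end PartB

section Lsec
variable (i : ℕ)

/-- the monomial exponents `x_l`, `l ≥ n - i` -/
def Hset : Set (Fin n →₀ ℕ) :=
  {s | ∃ l : Fin n, n - i ≤ (l : ℕ) ∧ s = Finsupp.single l 1}

/-- the ideal generated by the last `i` variables -/
def Lideal : Ideal (MvPolynomial (Fin n) k) :=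
  Ideal.span ((fun s => monomial s (1 : k)) '' Hset i)

lemma mem_Lideal_iff (f : MvPolynomial (Fin n) k) :
    f ∈ Lideal i ↔ ∀ μ ∈ f.support, ∃ l : Fin n, n - i ≤ (l : ℕ) ∧ μ l ≠ 0 := by
  rw [Lideal, mem_ideal_span_monomial_image]
  apply forall₂_congr
  intro μ hμ
  constructor
  · rintro ⟨s, ⟨l, hl, rfl⟩, hle⟩
    have := Finsupp.single_le_iff.mp hle
    exact ⟨l, hl, by omega⟩
  · rintro ⟨l, hl, hne⟩
    exact ⟨Finsupp.single l 1, ⟨l, hl, rfl⟩, Finsupp.single_le_iff.mpr (by omega)⟩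

lemma sub_pi_mem_Lideal (f : MvPolynomial (Fin n) k) :
    f - evalZero k n i f ∈ Lideal i := by
  rw [mem_Lideal_iff]
  intro μ hμ
  rw [mem_support_iff, coeff_sub, coeff_evalZero] at hμ
  by_cases h : Low (n - i) μ
  · rw [if_pos h] at hμ
    simp at hμ
  · simp only [Low, not_forall] at h
    obtain ⟨l, h1, h2⟩ := h
    exact ⟨l, h1, h2⟩

lemma Lideal_le_ker :
    Lideal i ≤ RingHom.ker (evalZero k n i : MvPolynomial (Fin n) k →+* MvPolynomial (Fin n) k) := by
  rw [Lideal, Ideal.span_le]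
  rintro g ⟨s, ⟨l, hl, rfl⟩, rfl⟩
  simp only [SetLike.mem_coe, RingHom.mem_ker, AlgHom.coe_ringHom_mk]
  show evalZero k n i (monomial (Finsupp.single l 1) 1) = 0
  rw [evalZero_monomial]
  rw [if_neg]
  intro hc
  have := hc l hl
  rw [Finsupp.single_eq_same] at this
  exact one_ne_zero this

lemma evalZero_of_mem_Lideal {f : MvPolynomial (Fin n) k} (hf : f ∈ Lideal i) :
    evalZero k n i f = 0 := Lideal_le_ker i hf

variable (I : Ideal (MvPolynomial (Fin n) k))

lemma sup_L_eq : I ⊔ Lideal i = Ibar I i ⊔ Lideal i := by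
  apply le_antisymm
  · apply sup_le _ le_sup_right
    intro f hf
    have h1 : evalZero k n i f ∈ Ibar I i := Ideal.mem_map_of_mem _ hf
    have h2 : f - evalZero k n i f ∈ Lideal i := sub_pi_mem_Lideal i f
    have : f = evalZero k n i f + (f - evalZero k n i f) := by ring
    rw [this]
    exact Submodule.add_mem _ (Ideal.mem_sup_left h1) (Ideal.mem_sup_right h2)
  · apply sup_le _ le_sup_right
    rw [Ibar, Ideal.map, Ideal.span_le]
    rintro g ⟨a, ha, rfl⟩
    have h2 : a - evalZero k n i a ∈ Lideal i := sub_pi_mem_Lideal i a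
    have : evalZero k n i a = a - (a - evalZero k n i a) := by ring
    rw [this]
    exact Submodule.sub_mem _ (Ideal.mem_sup_left ha) (Ideal.mem_sup_right h2)

lemma low_mem_sup_iff {f : MvPolynomial (Fin n) k} (hlow : LowP (n - i) f) :
    f ∈ Ibar I i ⊔ Lideal i ↔ f ∈ Ibar I i := by
  constructor
  · intro hf
    obtain ⟨a, ha, b, hb, rfl⟩ := Submodule.mem_sup.mp hf
    have hπ : evalZero k n i (a + b) = evalZero k n i a := by
      rw [map_add, evalZero_of_mem_Lideal i hb, add_zero]
    rw [← evalZero_eq_self i hlow, hπ]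
    exact pi_mem_Ibar I i ha
  · exact fun hf => Ideal.mem_sup_left hf

end Lsec

section Xdiv
variable {i : ℕ}

/-- the exponent vector of the variable `x_{n-i-1}` -/
def xv (i : ℕ) (hi : i < n) : Fin n →₀ ℕ := Finsupp.single (xIdx i hi) 1

lemma X_eq_mon (l : Fin n) : (X l : MvPolynomial (Fin n) k) = monomial (Finsupp.single l 1) 1 := by
  rw [← pow_one (X l), X_pow_eq_monomial]

lemma xIdx_val (hi : i < n) : ((xIdx i hi : Fin n) : ℕ) = n - i - 1 := rfl

lemma low_xv (hi : i < n) : Low (n - i) (xv i hi) := by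
  intro l hl
  rw [xv, Finsupp.single_apply, if_neg]
  intro hc
  have : (xIdx i hi : ℕ) = (l : ℕ) := by rw [hc]
  rw [xIdx_val] at this
  omega

lemma isLM_all_xdiv (hi : i < n) {g : MvPolynomial (Fin n) k} {μ : Fin n →₀ ℕ} {r : ℕ}
    (hlowg : LowP (n - i) g) (hhom : g.IsHomogeneous r) (hLM : IsLM g μ)
    (hx : μ (xIdx i hi) ≠ 0) : ∀ ν ∈ g.support, ν (xIdx i hi) ≠ 0 := by
  intro ν hν hc
  have hνμ : RevLexLT μ ν := by
    apply rl_high (m := n - i - 1)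
    · rw [degOf_eq_of_isHomog hhom hν, degOf_eq_of_isHomog hhom hLM.1]
    · intro l hl
      rcases eq_or_ne l (xIdx i hi) with rfl | hne
      · exact hc
      · have : (l : ℕ) ≠ n - i - 1 := fun h => hne (Fin.ext (by rw [xIdx_val]; exact h))
        exact hlowg ν hν l (by omega)
    · exact ⟨xIdx i hi, by rw [xIdx_val], hx⟩
  rcases hLM.2 ν hν with rfl | hlt
  · exact rl_irrefl ν hνμ
  · exact rl_asymm hlt hνμ

lemma div_by_x (hi : i < n) {h : MvPolynomial (Fin n) k}
    (hall : ∀ ν ∈ h.support, ν (xIdx i hi) ≠ 0) :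
    ∃ f : MvPolynomial (Fin n) k, monomial (xv i hi) (1 : k) * f = h := by
  classical
  refine ⟨∑ ν ∈ h.support, monomial (ν - xv i hi) (coeff ν h), ?_⟩
  rw [Finset.mul_sum]
  conv_rhs => rw [h.as_sum]
  apply Finset.sum_congr rfl
  intro ν hν
  rw [monomial_mul, one_mul, add_tsub_cancel_of_le]
  rw [xv, Finsupp.single_le_iff]
  exact Nat.one_le_iff_ne_zero.mpr (hall ν hν)

variable {I : Ideal (MvPolynomial (Fin n) k)}

/-- Direction ⇒ of statement 4: a monomial witness against `J̃ = J` yields a witness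
against `x` being a non-zerodivisor. -/
lemma colon_witness (hI : HomogIdeal I) (hi : i < n) (hne : Jtil i I ≠ Jlow i I) :
    ∃ f : MvPolynomial (Fin n) k, f * X (xIdx i hi) ∈ Ibar I i ⊔ Lideal i ∧
      f ∉ Ibar I i ⊔ Lideal i := by
  classical
  -- get a low monomial in Jtil \ Jlow
  have hle := Jlow_le_Jtil I i hi
  obtain ⟨f0, hf0t, hf0l⟩ : ∃ f0, f0 ∈ Jtil i I ∧ f0 ∉ Jlow i I := by
    by_contra hc
    push_neg at hc
    exact hne (le_antisymm (fun x hx => hc x hx) hle)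
  obtain ⟨μ', hμ'low, hmemt, hmeml⟩ := monomial_mem_Jtil_of_not_Jlow hi hf0t hf0l
  have hsuppμ' : (monomial μ' (1 : k)).support = {μ'} := by
    classical rw [support_monomial, if_neg one_ne_zero]
  -- unpack
  have hnotdiv : ∀ τ' ∈ T0low I i, ¬ τ' ≤ μ' := by
    intro τ' hτ' hle'
    apply hmeml
    rw [mem_Jlow_iff]
    intro ν hν
    rw [hsuppμ', Finset.mem_singleton] at hν
    subst hν
    exact ⟨τ', hτ', hle'⟩
  obtain ⟨τ, hτ, hτle⟩ : ∃ τ ∈ T0low I i, Finsupp.erase (xIdx i hi) τ ≤ μ' := by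
    rw [mem_Jtil_iff I i hi] at hmemt
    exact hmemt μ' (by rw [hsuppμ']; exact Finset.mem_singleton_self _)
  -- minimal power of x needed
  set P : ℕ → Prop := fun m => ∃ τ'' ∈ T0low I i, τ'' ≤ μ' + m • xv i hi with hP
  have hPa : P (τ (xIdx i hi)) := by
    refine ⟨τ, hτ, ?_⟩
    rw [Finsupp.le_def]
    intro l
    rcases eq_or_ne l (xIdx i hi) with rfl | hnel
    · simp only [Finsupp.add_apply, Finsupp.smul_apply, xv, Finsupp.single_eq_same, smul_eq_mul,
        mul_one]
      omega
    · have h1 : Finsupp.erase (xIdx i hi) τ l = τ l := Finsupp.erase_ne hnel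
      have h2 := Finsupp.le_def.mp hτle l
      simp only [Finsupp.add_apply, Finsupp.smul_apply, xv,
        Finsupp.single_apply, if_neg (fun hc => hnel (Fin.ext (congrArg Fin.val hc)).symm)]
      omega
  have hP0 : ¬ P 0 := by
    rintro ⟨τ'', hτ'', hle''⟩
    rw [zero_smul, add_zero] at hle''
    exact hnotdiv τ'' hτ'' hle''
  have hex : ∃ m, P m := ⟨_, hPa⟩
  set m0 := Nat.find hex with hm0
  have hm0P : P m0 := Nat.find_spec hex
  have hm0pos : 1 ≤ m0 := by
    rcases Nat.eq_zero_or_pos m0 with h | h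
    · exact absurd (h ▸ hm0P) hP0
    · exact h
  have hm0min : ¬ P (m0 - 1) := Nat.find_min hex (by omega)
  set u := μ' + (m0 - 1) • xv i hi with hu
  have hu_low : Low (n - i) u := by
    intro l hl
    simp only [hu, Finsupp.add_apply, Finsupp.smul_apply, hμ'low l hl, low_xv hi l hl,
      smul_eq_mul, mul_zero, add_zero]
  have hu_not : ∀ τ' ∈ T0low I i, ¬ τ' ≤ u := by
    intro τ' hτ' hle'
    exact hm0min ⟨τ', hτ', hle'⟩
  obtain ⟨τ'', hτ'', hle''⟩ : ∃ τ'' ∈ T0low I i, τ'' ≤ u + xv i hi := by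
    obtain ⟨τ'', h1, h2⟩ := hm0P
    refine ⟨τ'', h1, ?_⟩
    have : u + xv i hi = μ' + m0 • xv i hi := by
      rw [hu, add_assoc]
      congr 1
      rw [← succ_nsmul]
      congr 1
      omega
    rw [this]
    exact h2
  -- construct h = monomial δ 1 * g
  obtain ⟨g, hgIb, hgne, hgLM, hglow, hghom⟩ := T0low_elt hI hτ''
  set δ := (u + xv i hi) - τ'' with hδ
  have hδτ : δ + τ'' = u + xv i hi := by
    rw [hδ, add_comm]
    exact add_tsub_cancel_of_le hle''  -- τ'' + (u+xv - τ'') = u+xv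
  set h := monomial δ (1 : k) * g with hh
  have hhIb : h ∈ Ibar I i := Ideal.mul_mem_left _ _ hgIb
  have hhne : h ≠ 0 := mul_ne_zero (fun hc => one_ne_zero (by
    have := congrArg (coeff δ) hc
    rwa [coeff_monomial, if_pos rfl, coeff_zero] at this)) hgne
  have hhLM : IsLM h (u + xv i hi) := hδτ ▸ isLM_monomial_mul δ hgLM
  have hhlow : LowP (n - i) h := by
    intro ν hν
    obtain ⟨hle1, hsup1⟩ := mem_support_monomial_mul.mp hν
    intro l hl
    have h1 : δ l = 0 := by
      have h2 := Finsupp.le_def.mp (tsub_le_self (a := u + xv i hi) (b := τ'')) l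
      have h3 : (u + xv i hi) l = 0 := by
        simp [Finsupp.add_apply, hu_low l hl, low_xv hi l hl]
      rw [hδ] at *
      omega
    have h4 : (ν - δ) l = 0 := hglow _ hsup1 l hl
    have h5 := Finsupp.le_def.mp hle1 l
    have h6 : ν l - δ l = 0 := by
      rw [← Finsupp.tsub_apply] at *
      exact h4
    omega
  have hhhom : h.IsHomogeneous (degOf δ + degOf τ'') := by
    rw [hh]
    exact IsHomogeneous.mul (isHomogeneous_monomial (1 : k) rfl) hghom
  have hhx : ∀ ν ∈ h.support, ν (xIdx i hi) ≠ 0 := by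
    apply isLM_all_xdiv hi hhlow hhhom hhLM
    simp [Finsupp.add_apply, xv, Finsupp.single_eq_same]
  obtain ⟨f, hf⟩ := div_by_x hi hhx
  have hfne : f ≠ 0 := by
    intro hc
    rw [hc, mul_zero] at hf
    exact hhne hf.symm
  have hsuppf : ∀ w, w ∈ f.support ↔ xv i hi + w ∈ h.support := by
    intro w
    constructor
    · intro hw
      rw [← hf]
      exact mem_support_monomial_mul.mpr ⟨le_add_right le_rfl, by simpa using hw⟩
    · intro hw
      rw [← hf] at hw
      obtain ⟨h1, h2⟩ := mem_support_monomial_mul.mp hw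
      simpa using h2
  refine ⟨f, ?_, ?_⟩
  · rw [mul_comm, X_eq_mon, ← xv, hf]
    exact Ideal.mem_sup_left hhIb
  · -- f ∉ Ibar ⊔ L
    intro hmem
    have hflow : LowP (n - i) f := by
      intro w hw l hl
      have := hhlow _ ((hsuppf w).mp hw) l hl
      simp only [Finsupp.add_apply] at this
      omega
    have hfIb : f ∈ Ibar I i := (low_mem_sup_iff i I hflow).mp hmem
    have hfhom : f.IsHomogeneous (degOf δ + degOf τ'' - 1) := by
      apply isHomog_of_degOf
      intro w hw
      have h1 := degOf_eq_of_isHomog hhhom ((hsuppf w).mp hw)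
      rw [degOf_add] at h1
      have h2 : degOf (xv i hi) = 1 := by
        show degOf (Finsupp.single (xIdx i hi) 1) = 1
        rw [degOf, Finsupp.sum_single_index]
        rfl
      omega
    have hfLM : IsLM f u := by
      constructor
      · rw [hsuppf u, add_comm]
        exact hhLM.1
      · intro w hw
        rcases hhLM.2 _ ((hsuppf w).mp hw) with he | hlt
        · left
          have : xv i hi + w = xv i hi + u := by rw [he, add_comm]
          exact add_left_cancel this
        · right
          have hlt' : RevLexLT (w + xv i hi) (u + xv i hi) := by
            rwa [add_comm (xv i hi) w] at hlt
          exact rl_add_cancel hlt'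
    have : u ∈ T0low I i := lowmem_T0low hI hfIb hfne hflow hfhom hfLM
    exact hu_not u this le_rfl

end Xdiv


section Core
variable {i : ℕ} {I : Ideal (MvPolynomial (Fin n) k)}

lemma step_lemma (hi : i < n) (hJ : Jtil i I ≤ Jlow i I) {w : Fin n →₀ ℕ}
    (hw : w ∈ T0low I i) :
    ∃ τ ∈ T0low I i, τ ≤ Finsupp.erase (xIdx i hi) w := by
  have h1 : monomial w (1 : k) ∈ initialIdeal I := by
    rw [initialIdeal_eq]
    exact Ideal.subset_span ⟨w, hw.1, rfl⟩
  have h2 : monomial (Finsupp.erase (xIdx i hi) w) (1 : k) ∈ Jtil i I := by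
    have := Ideal.mem_map_of_mem (evalOne k n i) h1
    rwa [show (evalOne k n i) (monomial w (1:k)) = monomial (Finsupp.erase (xIdx i hi) w) 1 by
      rw [evalOne_monomial i hi _ _ (xIdx i hi) rfl, if_pos hw.2]] at this
  have h3 := hJ h2
  rw [mem_Jlow_iff] at h3
  apply h3
  classical rw [support_monomial, if_neg one_ne_zero]
  exact Finset.mem_singleton_self _

/-- the set of exponents of degree `r` below `μ0` in revlex -/
def measSet (r : ℕ) (μ0 : Fin n →₀ ℕ) : Set (Fin n →₀ ℕ) :=
  {ν | degOf ν = r ∧ RevLexLT ν μ0}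

lemma measSet_finite (r : ℕ) (μ0 : Fin n →₀ ℕ) : (measSet r μ0).Finite :=
  Set.Finite.subset (finite_degOf_eq r) fun ν hν => hν.1

/-- the number of exponents of degree `r` below `μ0` in revlex -/
def meas (r : ℕ) (μ0 : Fin n →₀ ℕ) : ℕ := (measSet_finite r μ0).toFinset.card

lemma meas_lt {r : ℕ} {μ0 μ1 : Fin n →₀ ℕ} (hdeg : degOf μ1 = r) (h : RevLexLT μ1 μ0) :
    meas r μ1 < meas r μ0 := by
  apply Finset.card_lt_card
  rw [Set.Finite.toFinset_ssubset_toFinset]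
  constructor
  · intro ν hν
    exact ⟨hν.1, rl_trans hν.2 h⟩
  · intro hc
    have : μ1 ∈ measSet r μ1 := hc ⟨hdeg, h⟩
    exact rl_irrefl μ1 this.2

lemma homogComp_mem_Ibar (hI : HomogIdeal I) {f : MvPolynomial (Fin n) k}
    (hf : f ∈ Ibar I i) (hlow : LowP (n - i) f) (s : ℕ) :
    homogeneousComponent s f ∈ Ibar I i := by
  obtain ⟨F, hFI, hFe⟩ := low_rep I i hf hlow
  rw [← hFe, evalZero_homogeneousComponent]
  exact Ideal.mem_map_of_mem _ (hI F hFI s)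

lemma erase_add_xv_le (hi : i < n) (μ0 : Fin n →₀ ℕ) :
    Finsupp.erase (xIdx i hi) (xv i hi + μ0) ≤ μ0 := by
  rw [Finsupp.le_def]
  intro l
  rcases eq_or_ne l (xIdx i hi) with rfl | hne
  · rw [Finsupp.erase_same]
    exact Nat.zero_le _
  · rw [Finsupp.erase_ne hne, Finsupp.add_apply, xv,
      Finsupp.single_apply, if_neg (fun hc => hne (Fin.ext (congrArg Fin.val hc)).symm)]
    omega

lemma lowP_monomial_mul {a : k} {δ : Fin n →₀ ℕ} {g : MvPolynomial (Fin n) k}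
    (hδ : Low (n - i) δ) (hg : LowP (n - i) g) :
    LowP (n - i) (monomial δ a * g) := by
  intro ν hν l hl
  rw [mem_support_iff, coeff_monomial_mul'] at hν
  by_cases hle : δ ≤ ν
  · rw [if_pos hle] at hν
    have h1 : coeff (ν - δ) g ≠ 0 := fun hc => hν (by rw [hc, mul_zero])
    have h2 := hg _ (mem_support_iff.mpr h1) l hl
    rw [Finsupp.tsub_apply] at h2
    have h3 := Finsupp.le_def.mp hle l
    have h4 := hδ l hl
    omega
  · rw [if_neg hle] at hν
    exact absurd rfl hν

lemma support_monomial_mul_subset {a : k} {δ : Fin n →₀ ℕ} {g : MvPolynomial (Fin n) k}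
    {ν : Fin n →₀ ℕ} (hν : ν ∈ (monomial δ a * g).support) :
    δ ≤ ν ∧ ν - δ ∈ g.support := by
  rw [mem_support_iff, coeff_monomial_mul'] at hν
  by_cases hle : δ ≤ ν
  · rw [if_pos hle] at hν
    exact ⟨hle, mem_support_iff.mpr fun hc => hν (by rw [hc, mul_zero])⟩
  · rw [if_neg hle] at hν
    exact absurd rfl hν

/-- The key reduction: if `J̃ ≤ J` then `x` is a non-zerodivisor modulo `Ī` on
low homogeneous polynomials. -/
lemma core (hI : HomogIdeal I) (hi : i < n) (hJ : Jtil i I ≤ Jlow i I) (r : ℕ) :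
    ∀ N : ℕ, ∀ f : MvPolynomial (Fin n) k,
      (∀ μ0, IsLM f μ0 → meas r μ0 ≤ N) → LowP (n - i) f → f.IsHomogeneous r →
      monomial (xv i hi) 1 * f ∈ Ibar I i → f ∈ Ibar I i := by
  intro N
  induction N using Nat.strong_induction_on with
  | _ N ih =>
  intro f hm hlow hhom hxf
  rcases eq_or_ne f 0 with rfl | hfne
  · exact Ideal.zero_mem _
  obtain ⟨μ0, hLM⟩ := exists_isLM hfne
  have hμ0deg : degOf μ0 = r := degOf_eq_of_isHomog hhom hLM.1
  have hμ0low : Low (n - i) μ0 := hlow μ0 hLM.1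
  -- the leading monomial of x*f
  set xf := monomial (xv i hi) (1 : k) * f with hxfdef
  have hxfne : xf ≠ 0 := mul_ne_zero (fun hc => one_ne_zero (by
    have := congrArg (coeff (xv i hi)) hc
    rwa [coeff_monomial, if_pos rfl, coeff_zero] at this)) hfne
  have hxfLM : IsLM xf (xv i hi + μ0) := isLM_monomial_mul _ hLM
  have hxflow : LowP (n - i) xf := lowP_monomial_mul (low_xv hi) hlow
  have hxfhom : xf.IsHomogeneous (1 + r) := by
    apply IsHomogeneous.mul _ hhom
    apply isHomogeneous_monomial
    show degOf (xv i hi) = 1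
    rw [xv, degOf, Finsupp.sum_single_index]
    rfl
  have hT0 : xv i hi + μ0 ∈ T0low I i := lowmem_T0low hI hxf hxfne hxflow hxfhom hxfLM
  obtain ⟨τ, hτ, hτle⟩ := step_lemma hi hJ hT0
  have hτμ0 : τ ≤ μ0 := le_trans hτle (erase_add_xv_le hi μ0)
  -- reduction
  obtain ⟨g, hgIb, hgne, hgLM, hglow, hghom⟩ := T0low_elt hI hτ
  set δ := μ0 - τ with hδ
  have hδτ : δ + τ = μ0 := by rw [hδ, add_comm]; exact add_tsub_cancel_of_le hτμ0
  have hδlow : Low (n - i) δ := by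
    intro l hl
    have h1 := Finsupp.le_def.mp (tsub_le_self (a := μ0) (b := τ)) l
    have := hμ0low l hl
    rw [hδ] at *
    omega
  have hcg : coeff τ g ≠ 0 := mem_support_iff.mp hgLM.1
  set a : k := coeff μ0 f / coeff τ g with ha
  set f' := f - monomial δ a * g with hf'
  have hsub : ∀ ν ∈ f'.support, ν ≠ μ0 ∧ RevLexLT ν μ0 := by
    intro ν hν
    have hcoeffν : coeff ν f' ≠ 0 := mem_support_iff.mp hν
    have hνμ0 : ν ≠ μ0 := by
      intro hc
      subst hc
      apply hcoeffν
      rw [hf', coeff_sub, ← hδτ, coeff_monomial_mul, ha,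
        div_mul_cancel₀ _ hcg, hδτ, sub_self]
    refine ⟨hνμ0, ?_⟩
    have : ν ∈ f.support ∨ ν ∈ (monomial δ a * g).support := by
      by_contra hc
      push_neg at hc
      apply hcoeffν
      rw [hf', coeff_sub, notMem_support_iff.mp hc.1, notMem_support_iff.mp hc.2, sub_self]
    rcases this with h | h
    · rcases hLM.2 ν h with rfl | hlt
      · exact absurd rfl hνμ0
      · exact hlt
    · obtain ⟨hle1, hsup1⟩ := support_monomial_mul_subset h
      rcases hgLM.2 _ hsup1 with he | hlt
      · exfalso
        apply hνμ0
        have : δ + (ν - δ) = ν := add_tsub_cancel_of_le hle1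
        rw [← this, he, hδτ]
      · have h2 := rl_add_right δ hlt
        rw [add_comm _ δ, add_comm _ δ, hδτ] at h2
        have : δ + (ν - δ) = ν := add_tsub_cancel_of_le hle1
        rwa [this] at h2
  have hf'low : LowP (n - i) f' := by
    intro ν hν l hl
    have : ν ∈ f.support ∨ ν ∈ (monomial δ a * g).support := by
      by_contra hc
      push_neg at hc
      apply mem_support_iff.mp hν
      rw [hf', coeff_sub, notMem_support_iff.mp hc.1, notMem_support_iff.mp hc.2, sub_self]
    rcases this with h | h
    · exact hlow ν h l hl
    · exact lowP_monomial_mul hδlow hglow ν h l hl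
  have hf'hom : f'.IsHomogeneous r := by
    apply IsHomogeneous.sub hhom
    have hδdeg : degOf δ + degOf τ = r := by rw [← degOf_add, hδτ, hμ0deg]
    have := IsHomogeneous.mul (isHomogeneous_monomial a (rfl : δ.degree = degOf δ)) hghom
    rwa [show δ.degree + degOf τ = r from hδdeg] at this
  have hxf' : monomial (xv i hi) 1 * f' ∈ Ibar I i := by
    rw [hf', mul_sub]
    apply Submodule.sub_mem _ hxf
    rw [mul_left_comm]
    exact Ideal.mul_mem_left _ _ (Ideal.mul_mem_left _ _ hgIb)
  have hfeq : f = f' + monomial δ a * g := by rw [hf']; ring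
  rcases eq_or_ne f' 0 with hz | hf'ne
  · rw [hfeq, hz, zero_add]
    exact Ideal.mul_mem_left _ _ hgIb
  · obtain ⟨μ1, hLM1⟩ := exists_isLM hf'ne
    have hμ1 := hsub μ1 hLM1.1
    have hμ1deg : degOf μ1 = r := degOf_eq_of_isHomog hf'hom hLM1.1
    have hlt : meas r μ1 < meas r μ0 := meas_lt hμ1deg hμ1.2
    have hN : meas r μ0 ≤ N := hm μ0 hLM
    have hf'Ib : f' ∈ Ibar I i := by
      apply ih (meas r μ1) (by omega) f' _ hf'low hf'hom hxf'
      intro ν hν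
      rw [isLM_unique hν hLM1]
    rw [hfeq]
    exact Submodule.add_mem _ hf'Ib (Ideal.mul_mem_left _ _ hgIb)

end Core

section Colon
variable {i : ℕ} {I : Ideal (MvPolynomial (Fin n) k)}

lemma homogComp_shift (hi : i < n) (r : ℕ) (g : MvPolynomial (Fin n) k) :
    homogeneousComponent (1 + r) (monomial (xv i hi) (1 : k) * g) =
      monomial (xv i hi) (1 : k) * homogeneousComponent r g := by
  ext ν
  rw [coeff_homogeneousComponent, coeff_monomial_mul', coeff_monomial_mul',
    coeff_homogeneousComponent]
  by_cases hle : xv i hi ≤ ν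
  · rw [if_pos hle, if_pos hle]
    have hdeg : degOf ν = 1 + degOf (ν - xv i hi) := by
      have h1 : xv i hi + (ν - xv i hi) = ν := add_tsub_cancel_of_le hle
      have h2 : degOf (xv i hi) = 1 := by
        rw [xv, degOf, Finsupp.sum_single_index]
        rfl
      conv_lhs => rw [← h1]
      rw [degOf_add, h2]
    have hd1 : (ν.degree = 1 + r) ↔ ((ν - xv i hi).degree = r) := by
      show (degOf ν = 1 + r) ↔ (degOf (ν - xv i hi) = r)
      omega
    by_cases hc : (ν - xv i hi).degree = r
    · rw [if_pos hc, if_pos (hd1.mpr hc)]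
    · rw [if_neg hc, if_neg (fun hh => hc (hd1.mp hh)), mul_zero]
  · rw [if_neg hle, if_neg hle, ite_self]

lemma colon_le (hI : HomogIdeal I) (hi : i < n) (hJ : Jtil i I ≤ Jlow i I)
    {f : MvPolynomial (Fin n) k}
    (hf : f * X (xIdx i hi) ∈ Ibar I i ⊔ Lideal i) : f ∈ Ibar I i ⊔ Lideal i := by
  have hLP : f - evalZero k n i f ∈ Lideal i := sub_pi_mem_Lideal i f
  have hfeq : f = evalZero k n i f + (f - evalZero k n i f) := by ring
  rw [hfeq]
  refine Submodule.add_mem _ ?_ (Ideal.mem_sup_right hLP)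
  set g := evalZero k n i f with hg
  have hglow : LowP (n - i) g := lowP_evalZero i f
  have hgX : monomial (xv i hi) (1 : k) * g ∈ Ibar I i ⊔ Lideal i := by
    have h1 : (f - g) * X (xIdx i hi) ∈ Lideal i := Ideal.mul_mem_right _ _ hLP
    have h2 : g * X (xIdx i hi) = f * X (xIdx i hi) - (f - g) * X (xIdx i hi) := by ring
    have h3 : g * X (xIdx i hi) ∈ Ibar I i ⊔ Lideal i := by
      rw [h2]
      exact Submodule.sub_mem _ hf (Ideal.mem_sup_right h1)
    have h4 : g * X (xIdx i hi) = monomial (xv i hi) (1 : k) * g := by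
      simp only [xv]
      rw [X_eq_mon, mul_comm]
    rwa [h4] at h3
  have hgXlow : LowP (n - i) (monomial (xv i hi) (1 : k) * g) :=
    lowP_monomial_mul (low_xv hi) hglow
  have hgXIb : monomial (xv i hi) (1 : k) * g ∈ Ibar I i :=
    (low_mem_sup_iff i I hgXlow).mp hgX
  apply Ideal.mem_sup_left
  rw [show (g : MvPolynomial (Fin n) k)
      = ∑ r ∈ Finset.range (g.totalDegree + 1), homogeneousComponent r g
    from (sum_homogeneousComponent g).symm]
  apply Submodule.sum_mem
  intro r hr
  have hgrlow : LowP (n - i) (homogeneousComponent r g) :=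
    fun ν hν => hglow ν (support_homogeneousComponent_subset r g hν)
  have hxgr : monomial (xv i hi) (1 : k) * homogeneousComponent r g ∈ Ibar I i := by
    rw [← homogComp_shift hi r g]
    exact homogComp_mem_Ibar hI hgXIb hgXlow (1 + r)
  rcases eq_or_ne (homogeneousComponent r g) 0 with hz | hne
  · rw [hz]; exact Ideal.zero_mem _
  obtain ⟨μ, hLM⟩ := exists_isLM hne
  apply core hI hi hJ r (meas r μ) _ _ hgrlow (homogeneousComponent_isHomogeneous r g) hxgr
  intro μ0 hμ0
  rw [isLM_unique hμ0 hLM]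

lemma colon_iff (hI : HomogIdeal I) (hi : i < n) :
    ((Ibar I i ⊔ Lideal i).colon (Ideal.span {(X (xIdx i hi) : MvPolynomial (Fin n) k)}) = Ibar I i ⊔ Lideal i) ↔
      Jtil i I = Jlow i I := by
  constructor
  · intro h
    by_contra hne
    obtain ⟨f, hf1, hf2⟩ := colon_witness hI hi hne
    have : f ∈ (Ibar I i ⊔ Lideal i).colon (Ideal.span {(X (xIdx i hi) : MvPolynomial (Fin n) k)}) :=
      Ideal.mem_colon_span_singleton.mpr hf1
    rw [h] at this
    exact hf2 this
  · intro hJeq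
    apply le_antisymm
    · intro ff hff
      exact colon_le hI hi (le_of_eq hJeq) (Ideal.mem_colon_span_singleton.mp hff)
    · intro ff hff
      exact Ideal.mem_colon_span_singleton.mpr (Ideal.mul_mem_right _ _ hff)

lemma span_z (hi : i < n) {z : Fin (i + 1) → MvPolynomial (Fin n) k}
    (hz : ∀ j : Fin (i + 1), (j : ℕ) < i →
      ∃ l : Fin n, (l : ℕ) = n - 1 - (j : ℕ) ∧ z j = X l) :
    Ideal.span (z '' {j : Fin (i + 1) | (j : ℕ) < i}) = Lideal i := by
  apply le_antisymm
  · rw [Ideal.span_le]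
    rintro g ⟨j, hj, rfl⟩
    have hj' : (j : ℕ) < i := hj
    obtain ⟨l, hl, hzl⟩ := hz j hj'
    rw [SetLike.mem_coe, hzl, X_eq_mon]
    apply Ideal.subset_span
    exact ⟨Finsupp.single l 1, ⟨l, by omega, rfl⟩, rfl⟩
  · rw [Lideal, Ideal.span_le]
    rintro g ⟨s, ⟨l, hl, rfl⟩, rfl⟩
    have hln : (l : ℕ) < n := l.isLt
    have hji : n - 1 - (l : ℕ) < i := by omega
    set j : Fin (i + 1) := ⟨n - 1 - (l : ℕ), by omega⟩ with hj
    obtain ⟨l', hl', hzl⟩ := hz j hji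
    have hll' : l' = l := Fin.ext (by rw [hl']; show n - 1 - (n - 1 - (l : ℕ)) = (l : ℕ); omega)
    apply Ideal.subset_span
    refine ⟨j, hji, ?_⟩
    rw [hzl, hll', X_eq_mon]

end Colon

end Work

/-- Corollary 3.2: `x_{n-i}` is a non-zerodivisor on
`S/(I, xₙ, …, x_{n-i+1})` if and only if `c_i(I) = -∞`, i.e. iff `J̃_i = J_i`. -/
theorem stmt_4 {k : Type*} [Field k] {n : ℕ} (I : Ideal (MvPolynomial (Fin n) k))
    (hI : HomogIdeal I) (i : ℕ) (hi : i < n) :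
    (((partIdeal I (fun j : Fin (i + 1) =>
          (X ⟨n - 1 - (j : ℕ), by omega⟩ : MvPolynomial (Fin n) k)) i).colon
        (Ideal.span {(X ⟨n - 1 - i, by omega⟩ : MvPolynomial (Fin n) k)})
      = partIdeal I (fun j : Fin (i + 1) =>
          (X ⟨n - 1 - (j : ℕ), by omega⟩ : MvPolynomial (Fin n) k)) i)
      ↔ cInv i I = ⊥) ∧ (cInv i I = ⊥ ↔ Jtil i I = Jlow i I) := by
  classical
  have hP : partIdeal I (fun j : Fin (i + 1) =>
      (X ⟨n - 1 - (j : ℕ), by omega⟩ : MvPolynomial (Fin n) k)) i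
      = Work.Ibar I i ⊔ Work.Lideal i := by
    rw [partIdeal, Work.span_z hi (fun j hj => ⟨⟨n - 1 - (j : ℕ), by omega⟩, rfl, rfl⟩)]
    exact Work.sup_L_eq i I
  have hX : (X (⟨n - 1 - i, by omega⟩ : Fin n) : MvPolynomial (Fin n) k)
      = X (Work.xIdx i hi) := by
    congr 1
    apply Fin.ext
    show n - 1 - i = n - i - 1
    omega
  constructor
  · rw [hP, hX]
    exact (Work.colon_iff hI hi).trans (Work.partB hI hi).symm
  · exact Work.partB hI hi
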